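/- The almost product structure P(U,V) = (pq⁻¹V, qp⁻¹U) on S³×S³ is an isometry for the nearly Kähler metric g: g(PX,PY) = g(X,Y) for all tangent vectors X,Y at any point (p,q). -/

import Mathlib

open Quaternion

noncomputable section


lemma re_mul_comm (x y : ℍ[ℝ]) : (x * y).re = (y * x).re := by
  simp only [Quaternion.re_mul]; ring

lemma inner_unit_mul (a : ℍ[ℝ]) (ha : ‖a‖ = 1) (U V : ℍ[ℝ]) :
    (inner ℝ (a * U) (a * V) : ℝ) = inner ℝ U V := by
  have hn : normSq a = 1 := by
    have := Quaternion.normSq_eq_norm_mul_self a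
    rw [ha] at this; simpa using this
  rw [Quaternion.inner_def, Quaternion.inner_def, StarMul.star_mul,
    show a * U * (star V * star a) = a * (U * star V) * star a by
      simp [mul_assoc],
    re_mul_comm, ← mul_assoc, star_mul_self, hn]
  simp

/-- The almost complex structure `J` at the point `(p, q)` of `S³ × S³`,
acting on `T_p S³ × T_q S³ ⊆ ℍ × ℍ`:
`J(U,V) = (1/√3)(2pq⁻¹V − U, −2qp⁻¹U + V)`. -/
def Jmap (p q : ℍ[ℝ]) (W : ℍ[ℝ] × ℍ[ℝ]) : ℍ[ℝ] × ℍ[ℝ] :=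
  (Real.sqrt 3)⁻¹ •
    ((2 : ℝ) • (p * q⁻¹ * W.2) - W.1, -((2 : ℝ) • (q * p⁻¹ * W.1)) + W.2)

/-- The almost product structure `P` at `(p, q)`: `P(U,V) = (pq⁻¹V, qp⁻¹U)`. -/
def Pmap (p q : ℍ[ℝ]) (W : ℍ[ℝ] × ℍ[ℝ]) : ℍ[ℝ] × ℍ[ℝ] :=
  (p * q⁻¹ * W.2, q * p⁻¹ * W.1)

/-- The product round metric on `S³ × S³` (on tangent pairs). -/
def prodInner (X Y : ℍ[ℝ] × ℍ[ℝ]) : ℝ :=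
  (inner ℝ X.1 Y.1 : ℝ) + (inner ℝ X.2 Y.2 : ℝ)

/-- The nearly Kähler metric `g(X,Y) = (1/2)(⟨X,Y⟩ + ⟨JX,JY⟩)` at `(p,q)`. -/
def gmet (p q : ℍ[ℝ]) (X Y : ℍ[ℝ] × ℍ[ℝ]) : ℝ :=
  (1 / 2) * (prodInner X Y + prodInner (Jmap p q X) (Jmap p q Y))

/-- `P` is an isometry of the nearly Kähler metric `g`. -/
theorem stmt_4 (p q : ℍ[ℝ]) (hp : ‖p‖ = 1) (hq : ‖q‖ = 1)
    (X Y : ℍ[ℝ] × ℍ[ℝ]) :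
    gmet p q (Pmap p q X) (Pmap p q Y) = gmet p q X Y := by
  have hp0 : p ≠ 0 := by intro h; simp [h] at hp
  have hq0 : q ≠ 0 := by intro h; simp [h] at hq
  have ha : ‖p * q⁻¹‖ = 1 := by simp [norm_mul, norm_inv, hp, hq]
  have hb : ‖q * p⁻¹‖ = 1 := by simp [norm_mul, norm_inv, hp, hq]
  have haux1 : ∀ W : ℍ[ℝ], p * q⁻¹ * (q * p⁻¹ * W) = W := by
    intro W
    rw [show p * q⁻¹ * (q * p⁻¹ * W) = p * (q⁻¹ * q) * p⁻¹ * W by simp [mul_assoc]]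
    simp [inv_mul_cancel₀ hq0, mul_inv_cancel₀ hp0]
  have haux2 : ∀ W : ℍ[ℝ], q * p⁻¹ * (p * q⁻¹ * W) = W := by
    intro W
    rw [show q * p⁻¹ * (p * q⁻¹ * W) = q * (p⁻¹ * p) * q⁻¹ * W by simp [mul_assoc]]
    simp [inv_mul_cancel₀ hp0, mul_inv_cancel₀ hq0]
  simp only [gmet, prodInner, Jmap, Pmap, haux1, haux2, Prod.smul_mk, Prod.fst, Prod.snd,
    smul_sub, smul_add, smul_neg, smul_smul]
  simp only [inner_sub_left, inner_sub_right, inner_add_left, inner_add_right,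
    inner_neg_left, inner_neg_right, real_inner_smul_left, real_inner_smul_right,
    inner_unit_mul _ ha, inner_unit_mul _ hb]
  ring_nf
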